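/- arXiv:2604.12263 — 3 statements merged into one kernel-verified Lean document; each statement's English description precedes it below -/
import Mathlib

section
/- Let μ and ν be Borel probability measures on ℝ with quantile functions Q_μ and Q_ν, and suppose both have finite second moments. Then the maximum of ∫ a·b dπ(a,b) over all couplings π of μ and ν equals ∫₀¹ Q_μ(t) Q_ν(t) dt, attained by the comonotonic coupling (Q_μ(ξ), Q_ν(ξ)) with ξ uniform on (0,1). -/
open MeasureTheory Set

/-- Quantile function of a measure on ℝ: `Q_μ(t) = inf {x : μ((-∞,x]) ≥ t}`. -/
noncomputable def quantile (μ : Measure ℝ) (t : ℝ) : ℝ :=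
  sInf {x : ℝ | t ≤ (μ (Iic x)).toReal}

/-- A coupling of `μ` and `ν` is a measure on `ℝ × ℝ` with first marginal `μ`
and second marginal `ν`. -/
def IsCoupling (π : Measure (ℝ × ℝ)) (μ ν : Measure ℝ) : Prop :=
  π.map Prod.fst = μ ∧ π.map Prod.snd = ν

open ProbabilityTheory Filter Topology

namespace HFaux

variable {μ ν : Measure ℝ} {π : Measure (ℝ × ℝ)}

lemma quantile_eq (μ : Measure ℝ) [IsProbabilityMeasure μ] (t : ℝ) :
    quantile μ t = sInf {x | t ≤ cdf μ x} := by
  simp_rw [quantile, cdf_eq_real, measureReal_def]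

lemma gal [IsProbabilityMeasure μ] {t x : ℝ} (h0 : 0 < t) (h1 : t < 1) :
    quantile μ t ≤ x ↔ t ≤ cdf μ x := by
  rw [quantile_eq]
  set S := {y : ℝ | t ≤ cdf μ y} with hS
  have hup : ∀ ⦃y z : ℝ⦄, y ∈ S → y ≤ z → z ∈ S := fun y z hy hyz =>
    le_trans hy (monotone_cdf μ hyz)
  have hne : S.Nonempty := by
    obtain ⟨y, hy⟩ := ((tendsto_cdf_atTop μ).eventually (eventually_ge_nhds h1)).exists
    exact ⟨y, hy⟩
  have hbdd : BddBelow S := by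
    obtain ⟨y0, hy0⟩ := ((tendsto_cdf_atBot μ).eventually (eventually_lt_nhds h0)).exists
    refine ⟨y0, fun y hy => ?_⟩
    by_contra h
    push_neg at h
    exact absurd (hy.trans (monotone_cdf μ h.le)) (not_le.2 hy0)
  have hmem : sInf S ∈ S := by
    have htend : Tendsto (cdf μ) (𝓝[>] (sInf S)) (𝓝 (cdf μ (sInf S))) :=
      ((cdf μ).right_continuous (sInf S)).tendsto.mono_left
        (nhdsWithin_mono _ Ioi_subset_Ici_self)
    show t ≤ cdf μ (sInf S)
    refine ge_of_tendsto htend ?_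
    filter_upwards [self_mem_nhdsWithin] with y hy
    obtain ⟨z, hz, hzy⟩ := csInf_lt_iff hbdd hne |>.1 hy
    exact hup hz hzy.le
  constructor
  · intro h
    exact le_trans hmem (monotone_cdf μ h)
  · intro h
    exact csInf_le hbdd h

lemma aemeasurable_quantile (μ : Measure ℝ) [IsProbabilityMeasure μ] :
    AEMeasurable (quantile μ) (volume.restrict (Ioo (0:ℝ) 1)) := by
  refine ⟨(Ioo (0:ℝ) 1).piecewise (quantile μ) fun _ => 0, ?_, ?_⟩
  · refine measurable_of_Iic fun x => ?_
    have : (Ioo (0:ℝ) 1).piecewise (quantile μ) (fun _ => 0) ⁻¹' Iic x =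
        (Ioo (0:ℝ) 1 ∩ Iic (cdf μ x)) ∪ ((Ioo (0:ℝ) 1)ᶜ ∩ (if (0:ℝ) ≤ x then univ else ∅)) := by
      ext t
      by_cases ht : t ∈ Ioo (0:ℝ) 1
      · simp only [mem_preimage, Set.piecewise_eq_of_mem _ _ _ ht, mem_Iic, mem_union, mem_inter_iff,
          ht, true_and, mem_compl_iff, not_true, false_and, or_false]
        exact gal ht.1 ht.2
      · simp only [mem_preimage, Set.piecewise_eq_of_notMem _ _ _ ht, mem_Iic, mem_union,
          mem_inter_iff, ht, false_and, false_or, mem_compl_iff, not_false_iff, true_and]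
        split_ifs with h <;> simp [h]
    rw [this]
    refine (measurableSet_Ioo.inter measurableSet_Iic).union
      (measurableSet_Ioo.compl.inter ?_)
    split_ifs <;> simp
  · filter_upwards [ae_restrict_mem measurableSet_Ioo] with t ht
    exact (Set.piecewise_eq_of_mem _ _ _ ht).symm

lemma map_quantile (μ : Measure ℝ) [IsProbabilityMeasure μ] :
    (volume.restrict (Ioo (0:ℝ) 1)).map (quantile μ) = μ := by
  refine Measure.ext_of_Iic _ _ fun x => ?_
  rw [Measure.map_apply_of_aemeasurable (aemeasurable_quantile μ) measurableSet_Iic,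
    Measure.restrict_apply' measurableSet_Ioo]
  have hset : quantile μ ⁻¹' Iic x ∩ Ioo (0:ℝ) 1 = Iic (cdf μ x) ∩ Ioo (0:ℝ) 1 := by
    ext t
    simp only [mem_inter_iff, mem_preimage, mem_Iic, and_congr_left_iff]
    exact fun ht => gal ht.1 ht.2
  rw [hset, ← ofReal_cdf μ x]
  have h0 : 0 ≤ cdf μ x := cdf_nonneg μ x
  have h1 : cdf μ x ≤ 1 := cdf_le_one μ x
  rcases lt_or_eq_of_le h1 with h1' | h1'
  · have : Iic (cdf μ x) ∩ Ioo (0:ℝ) 1 = Ioc 0 (cdf μ x) := by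
      ext t
      simp only [mem_inter_iff, mem_Iic, mem_Ioo, mem_Ioc]
      constructor
      · rintro ⟨h, h2, _⟩; exact ⟨h2, h⟩
      · rintro ⟨h2, h⟩; exact ⟨h, h2, lt_of_le_of_lt h h1'⟩
    rw [this, Real.volume_Ioc, sub_zero]
  · have : Iic (cdf μ x) ∩ Ioo (0:ℝ) 1 = Ioo (0:ℝ) 1 := by
      rw [inter_eq_right]
      exact fun t ht => le_of_lt (h1' ▸ ht.2)
    rw [this, Real.volume_Ioo, sub_zero, ← h1']

lemma comon_meas (μ ν : Measure ℝ) [IsProbabilityMeasure μ] [IsProbabilityMeasure ν] (s t : ℝ) :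
    (volume.restrict (Ioo (0:ℝ) 1)) {u | s < quantile μ u ∧ t < quantile ν u}
      = min (μ (Ioi s)) (ν (Ioi t)) := by
  rw [Measure.restrict_apply' measurableSet_Ioo]
  set a := cdf μ s with ha
  set b := cdf ν t with hb
  have ha0 : 0 ≤ a := cdf_nonneg μ s
  have hb0 : 0 ≤ b := cdf_nonneg ν t
  have ha1 : a ≤ 1 := cdf_le_one μ s
  have hb1 : b ≤ 1 := cdf_le_one ν t
  have hset : {u | s < quantile μ u ∧ t < quantile ν u} ∩ Ioo (0:ℝ) 1
      = Ioo (max a b) 1 := by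
    ext u
    simp only [mem_inter_iff, mem_setOf_eq, mem_Ioo, max_lt_iff]
    constructor
    · rintro ⟨⟨h1, h2⟩, h3, h4⟩
      refine ⟨⟨?_, ?_⟩, h4⟩
      · exact lt_of_not_ge fun h => (not_le.2 h1) ((gal h3 h4).2 h)
      · exact lt_of_not_ge fun h => (not_le.2 h2) ((gal h3 h4).2 h)
    · rintro ⟨⟨h1, h2⟩, h4⟩
      have h3 : 0 < u := lt_of_le_of_lt ha0 h1
      refine ⟨⟨?_, ?_⟩, h3, h4⟩
      · exact lt_of_not_ge fun h => (not_le.2 h1) ((gal h3 h4).1 h)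
      · exact lt_of_not_ge fun h => (not_le.2 h2) ((gal h3 h4).1 h)
  rw [hset, Real.volume_Ioo]
  have hμIoi : μ (Ioi s) = ENNReal.ofReal (1 - a) := by
    rw [← compl_Iic, prob_compl_eq_one_sub measurableSet_Iic, ← ofReal_cdf μ s, ← ha,
      ← ENNReal.ofReal_one, ← ENNReal.ofReal_sub _ ha0]
  have hνIoi : ν (Ioi t) = ENNReal.ofReal (1 - b) := by
    rw [← compl_Iic, prob_compl_eq_one_sub measurableSet_Iic, ← ofReal_cdf ν t, ← hb,
      ← ENNReal.ofReal_one, ← ENNReal.ofReal_sub _ hb0]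
  rw [hμIoi, hνIoi]
  rcases le_total a b with h | h
  · rw [max_eq_right h, min_eq_right (ENNReal.ofReal_le_ofReal (by linarith))]
  · rw [max_eq_left h, min_eq_left (ENNReal.ofReal_le_ofReal (by linarith))]

/-! ### The auxiliary function `g` -/

noncomputable def g (s a : ℝ) : ℝ := (if s < a then 1 else 0) - (if s < 0 then 1 else 0)

noncomputable def c (s : ℝ) : ℝ := if s < 0 then 1 else 0

lemma g_eq_ind (a s : ℝ) :
    g s a = (Ico (0:ℝ) a).indicator 1 s - (Ico a (0:ℝ)).indicator 1 s := by
  simp only [g, indicator_apply, mem_Ico, Pi.one_apply]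
  split_ifs <;> simp_all <;> linarith

lemma abs_g_eq_ind (a s : ℝ) :
    |g s a| = (Ico (0:ℝ) a).indicator 1 s + (Ico a (0:ℝ)).indicator 1 s := by
  simp only [g, indicator_apply, mem_Ico, Pi.one_apply]
  split_ifs <;> simp_all <;> linarith

lemma integrable_ind (a b : ℝ) : Integrable ((Ico a b).indicator (1 : ℝ → ℝ)) volume :=
  (integrable_indicator_iff measurableSet_Ico).2
    (integrableOn_const measure_Ico_lt_top.ne)

lemma integral_ind (a b : ℝ) :
    ∫ s, (Ico a b).indicator (1 : ℝ → ℝ) s = (ENNReal.ofReal (b - a)).toReal := by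
  rw [integral_indicator_one measurableSet_Ico, measureReal_def, Real.volume_Ico]

lemma integrable_g (a : ℝ) : Integrable (fun s => g s a) volume := by
  have : (fun s => g s a)
      = fun s => (Ico (0:ℝ) a).indicator 1 s - (Ico a (0:ℝ)).indicator 1 s :=
    funext fun s => g_eq_ind a s
  rw [this]
  exact (integrable_ind 0 a).sub (integrable_ind a 0)

lemma integral_g (a : ℝ) : ∫ s, g s a = a := by
  have : (fun s => g s a)
      = fun s => (Ico (0:ℝ) a).indicator 1 s - (Ico a (0:ℝ)).indicator 1 s :=
    funext fun s => g_eq_ind a s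
  rw [this, integral_sub (integrable_ind 0 a) (integrable_ind a 0), integral_ind, integral_ind,
    sub_zero, zero_sub, ENNReal.toReal_ofReal', ENNReal.toReal_ofReal']
  rcases le_total a 0 with h | h
  · rw [max_eq_right h, max_eq_left (by linarith)]; ring
  · rw [max_eq_left h, max_eq_right (by linarith)]; ring

lemma integral_abs_g (a : ℝ) : ∫ s, |g s a| = |a| := by
  have : (fun s => |g s a|)
      = fun s => (Ico (0:ℝ) a).indicator 1 s + (Ico a (0:ℝ)).indicator 1 s :=
    funext fun s => abs_g_eq_ind a s
  rw [this, integral_add (integrable_ind 0 a) (integrable_ind a 0), integral_ind, integral_ind,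
    sub_zero, zero_sub, ENNReal.toReal_ofReal', ENNReal.toReal_ofReal']
  rcases le_total a 0 with h | h
  · rw [max_eq_right h, max_eq_left (by linarith), abs_of_nonpos h]; ring
  · rw [max_eq_left h, max_eq_right (by linarith), abs_of_nonneg h]; ring

lemma measurable_g2 : Measurable fun x : ℝ × ℝ => g x.1 x.2 := by
  unfold g
  exact (Measurable.ite (measurableSet_lt measurable_fst measurable_snd) measurable_const
    measurable_const).sub
    (Measurable.ite (measurableSet_lt measurable_fst measurable_const) measurable_const
    measurable_const)

lemma measurable_G :
    Measurable fun q : (ℝ × ℝ) × (ℝ × ℝ) => g q.2.1 q.1.1 * g q.2.2 q.1.2 := by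
  exact (measurable_g2.comp ((measurable_fst.comp measurable_snd).prodMk
      (measurable_fst.comp measurable_fst))).mul
    (measurable_g2.comp ((measurable_snd.comp measurable_snd).prodMk
      (measurable_snd.comp measurable_fst)))

/-! ### Couplings -/

lemma coupling_prob (hc : IsCoupling π μ ν) [IsProbabilityMeasure μ] :
    IsProbabilityMeasure π := by
  constructor
  rw [← Set.preimage_univ (f := @Prod.fst ℝ ℝ),
    ← Measure.map_apply measurable_fst MeasurableSet.univ, hc.1, measure_univ]

lemma coupling_integrable (hc : IsCoupling π μ ν) [IsProbabilityMeasure μ]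
    [IsProbabilityMeasure ν] (hμ2 : MemLp id 2 μ) (hν2 : MemLp id 2 ν) :
    Integrable (fun p : ℝ × ℝ => p.1 * p.2) π := by
  have h1 : MemLp (fun p : ℝ × ℝ => p.1) 2 π := by
    rw [← hc.1] at hμ2
    exact (memLp_map_measure_iff aestronglyMeasurable_id measurable_fst.aemeasurable).1 hμ2
  have h2 : MemLp (fun p : ℝ × ℝ => p.2) 2 π := by
    rw [← hc.2] at hν2
    exact (memLp_map_measure_iff aestronglyMeasurable_id measurable_snd.aemeasurable).1 hν2
  have := memLp_one_iff_integrable.1 <|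
    h2.smul (φ := fun p : ℝ × ℝ => p.1) h1 (hpqr := ⟨by norm_num [ENNReal.inv_two_add_inv_two]⟩)
  exact this

lemma integrable_indicator_one' {S : Set (ℝ × ℝ)} (hS : MeasurableSet S)
    [IsProbabilityMeasure π] : Integrable (S.indicator (1 : ℝ × ℝ → ℝ)) π :=
  (integrable_indicator_iff hS).2 (integrableOn_const (measure_lt_top π S).ne)

lemma marg_fst (hc : IsCoupling π μ ν) (s : ℝ) :
    π {q : ℝ × ℝ | s < q.1} = μ (Ioi s) := by
  rw [← hc.1, Measure.map_apply measurable_fst measurableSet_Ioi]; rfl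

lemma marg_snd (hc : IsCoupling π μ ν) (t : ℝ) :
    π {q : ℝ × ℝ | t < q.2} = ν (Ioi t) := by
  rw [← hc.2, Measure.map_apply measurable_snd measurableSet_Ioi]; rfl

lemma g_mul_expand (s t : ℝ) (p : ℝ × ℝ) :
    g s p.1 * g t p.2 = ({q : ℝ × ℝ | s < q.1 ∧ t < q.2}.indicator 1 p)
      - c s * ({q : ℝ × ℝ | t < q.2}.indicator 1 p)
      - c t * ({q : ℝ × ℝ | s < q.1}.indicator 1 p)
      + c s * c t := by
  simp only [g, c, indicator_apply, mem_setOf_eq, Pi.one_apply]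
  split_ifs <;> simp_all <;> linarith

lemma mset1 (s t : ℝ) : MeasurableSet {q : ℝ × ℝ | s < q.1 ∧ t < q.2} :=
  (measurable_fst measurableSet_Ioi).inter (measurable_snd measurableSet_Ioi)

lemma mset2 (t : ℝ) : MeasurableSet {q : ℝ × ℝ | t < q.2} :=
  measurable_snd measurableSet_Ioi

lemma mset3 (s : ℝ) : MeasurableSet {q : ℝ × ℝ | s < q.1} :=
  measurable_fst measurableSet_Ioi

lemma K_eq [IsProbabilityMeasure μ] [IsProbabilityMeasure ν] [IsProbabilityMeasure π]
    (hc : IsCoupling π μ ν) (s t : ℝ) :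
    ∫ p, g s p.1 * g t p.2 ∂π
      = (π {q : ℝ × ℝ | s < q.1 ∧ t < q.2}).toReal
        - c s * (ν (Ioi t)).toReal - c t * (μ (Ioi s)).toReal + c s * c t := by
  have i1 : Integrable (fun p : ℝ × ℝ => ({q : ℝ × ℝ | s < q.1 ∧ t < q.2}.indicator 1 p : ℝ)) π :=
    integrable_indicator_one' (mset1 s t)
  have i2 : Integrable (fun p : ℝ × ℝ => c s * ({q : ℝ × ℝ | t < q.2}.indicator 1 p : ℝ)) π :=
    (integrable_indicator_one' (mset2 t)).const_mul (c s)
  have i3 : Integrable (fun p : ℝ × ℝ => c t * ({q : ℝ × ℝ | s < q.1}.indicator 1 p : ℝ)) π :=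
    (integrable_indicator_one' (mset3 s)).const_mul (c t)
  have i12 : Integrable (fun p : ℝ × ℝ => ({q : ℝ × ℝ | s < q.1 ∧ t < q.2}.indicator 1 p : ℝ)
      - c s * ({q : ℝ × ℝ | t < q.2}.indicator 1 p : ℝ)) π := i1.sub i2
  have i123 : Integrable (fun p : ℝ × ℝ => ({q : ℝ × ℝ | s < q.1 ∧ t < q.2}.indicator 1 p : ℝ)
      - c s * ({q : ℝ × ℝ | t < q.2}.indicator 1 p : ℝ)
      - c t * ({q : ℝ × ℝ | s < q.1}.indicator 1 p : ℝ)) π := i12.sub i3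
  rw [show (fun p : ℝ × ℝ => g s p.1 * g t p.2)
      = fun p => ({q : ℝ × ℝ | s < q.1 ∧ t < q.2}.indicator 1 p)
        - c s * ({q : ℝ × ℝ | t < q.2}.indicator 1 p)
        - c t * ({q : ℝ × ℝ | s < q.1}.indicator 1 p)
        + c s * c t from funext (g_mul_expand s t)]
  rw [integral_add i123 (integrable_const _),
    integral_sub i12 i3, integral_sub i1 i2,
    integral_const, integral_const_mul, integral_const_mul,
    integral_indicator_one (mset1 s t), integral_indicator_one (mset2 t),
    integral_indicator_one (mset3 s)]
  simp only [measureReal_def]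
  rw [marg_fst hc, marg_snd hc]
  simp [measure_univ]

lemma intF [IsProbabilityMeasure π] (hint : Integrable (fun p : ℝ × ℝ => p.1 * p.2) π) :
    Integrable (fun q : (ℝ × ℝ) × (ℝ × ℝ) => g q.2.1 q.1.1 * g q.2.2 q.1.2)
      (π.prod (volume.prod volume)) := by
  rw [integrable_prod_iff measurable_G.aestronglyMeasurable]
  constructor
  · exact Eventually.of_forall fun p => (integrable_g p.1).mul_prod (integrable_g p.2)
  · have heq : ∀ p : ℝ × ℝ,
        (∫ z : ℝ × ℝ, ‖g z.1 p.1 * g z.2 p.2‖ ∂(volume.prod volume)) = |p.1| * |p.2| := by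
      intro p
      have h : ∀ z : ℝ × ℝ, ‖g z.1 p.1 * g z.2 p.2‖ = |g z.1 p.1| * |g z.2 p.2| := fun z => by
        rw [Real.norm_eq_abs, abs_mul]
      simp_rw [h]
      rw [integral_prod_mul (fun s => |g s p.1|) (fun t => |g t p.2|),
        integral_abs_g, integral_abs_g]
    simp_rw [heq]
    exact hint.abs.congr (Eventually.of_forall fun p => abs_mul p.1 p.2)

lemma chain [IsProbabilityMeasure π] (hint : Integrable (fun p : ℝ × ℝ => p.1 * p.2) π) :
    ∫ p, p.1 * p.2 ∂π
      = ∫ z : ℝ × ℝ, (∫ p, g z.1 p.1 * g z.2 p.2 ∂π) ∂(volume.prod volume) := by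
  have h1 : ∀ p : ℝ × ℝ,
      p.1 * p.2 = ∫ z : ℝ × ℝ, g z.1 p.1 * g z.2 p.2 ∂(volume.prod volume) := by
    intro p
    rw [integral_prod_mul (fun s => g s p.1) (fun t => g t p.2), integral_g, integral_g]
  calc ∫ p, p.1 * p.2 ∂π
      = ∫ p, ∫ z : ℝ × ℝ, g z.1 p.1 * g z.2 p.2 ∂(volume.prod volume) ∂π := by
        exact integral_congr_ae (Eventually.of_forall fun p => h1 p)
    _ = ∫ z : ℝ × ℝ, (∫ p, g z.1 p.1 * g z.2 p.2 ∂π) ∂(volume.prod volume) :=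
        integral_integral_swap (intF hint)

lemma intK [IsProbabilityMeasure π] (hint : Integrable (fun p : ℝ × ℝ => p.1 * p.2) π) :
    Integrable (fun z : ℝ × ℝ => ∫ p, g z.1 p.1 * g z.2 p.2 ∂π) (volume.prod volume) :=
  (intF hint).integral_prod_right

lemma coupling_set_le (hc : IsCoupling π μ ν) (s t : ℝ) :
    π {q : ℝ × ℝ | s < q.1 ∧ t < q.2} ≤ min (μ (Ioi s)) (ν (Ioi t)) := by
  refine le_min ?_ ?_
  · rw [← marg_fst hc s]
    exact measure_mono fun q hq => hq.1
  · rw [← marg_snd hc t]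
    exact measure_mono fun q hq => hq.2

end HFaux

open HFaux in
/-- Upper Hoeffding–Fréchet bound: the maximum of `∫ a·b dπ` over couplings of `μ`
and `ν` equals `∫₀¹ Q_μ(t) Q_ν(t) dt`, attained by the comonotonic coupling. -/
theorem stmt0 (μ ν : Measure ℝ) [IsProbabilityMeasure μ] [IsProbabilityMeasure ν]
    (hμ2 : MemLp id 2 μ) (hν2 : MemLp id 2 ν) :
    IsGreatest ((fun π : Measure (ℝ × ℝ) => ∫ p, p.1 * p.2 ∂π) '' {π | IsCoupling π μ ν})
      (∫ t in Ioo (0:ℝ) 1, quantile μ t * quantile ν t) ∧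
    IsCoupling ((volume.restrict (Ioo (0:ℝ) 1)).map
      (fun t => (quantile μ t, quantile ν t))) μ ν ∧
    (∫ p, p.1 * p.2
        ∂((volume.restrict (Ioo (0:ℝ) 1)).map (fun t => (quantile μ t, quantile ν t))))
      = ∫ t in Ioo (0:ℝ) 1, quantile μ t * quantile ν t := by
  set m := volume.restrict (Ioo (0:ℝ) 1) with hm
  set Φ : ℝ → ℝ × ℝ := fun t => (quantile μ t, quantile ν t) with hΦ
  have hΦm : AEMeasurable Φ m :=
    (aemeasurable_quantile μ).prodMk (aemeasurable_quantile ν)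
  set π₀ : Measure (ℝ × ℝ) := m.map Φ with hπ₀
  have hc0 : IsCoupling π₀ μ ν := by
    constructor
    · rw [hπ₀, AEMeasurable.map_map_of_aemeasurable measurable_fst.aemeasurable hΦm]
      exact map_quantile μ
    · rw [hπ₀, AEMeasurable.map_map_of_aemeasurable measurable_snd.aemeasurable hΦm]
      exact map_quantile ν
  haveI : IsProbabilityMeasure π₀ := coupling_prob hc0
  have hint0 : Integrable (fun p : ℝ × ℝ => p.1 * p.2) π₀ :=
    coupling_integrable hc0 hμ2 hν2
  have hval : (∫ p, p.1 * p.2 ∂π₀) = ∫ t in Ioo (0:ℝ) 1, quantile μ t * quantile ν t := by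
    rw [hπ₀, integral_map hΦm (show AEStronglyMeasurable (fun p : ℝ × ℝ => p.1 * p.2) _ from
      (measurable_fst.mul measurable_snd).aestronglyMeasurable)]
  have hπ₀A : ∀ s t : ℝ, π₀ {q : ℝ × ℝ | s < q.1 ∧ t < q.2}
      = min (μ (Ioi s)) (ν (Ioi t)) := by
    intro s t
    rw [hπ₀, Measure.map_apply_of_aemeasurable hΦm (mset1 s t)]
    exact comon_meas μ ν s t
  refine ⟨⟨⟨π₀, hc0, hval⟩, ?_⟩, hc0, hval⟩
  rintro x ⟨π, hπ, rfl⟩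
  haveI : IsProbabilityMeasure π := coupling_prob hπ
  have hint : Integrable (fun p : ℝ × ℝ => p.1 * p.2) π :=
    coupling_integrable hπ hμ2 hν2
  rw [← hval]
  show ∫ p, p.1 * p.2 ∂π ≤ ∫ p, p.1 * p.2 ∂π₀
  rw [chain hint, chain hint0]
  refine integral_mono (intK hint) (intK hint0) fun z => ?_
  show ∫ p, g z.1 p.1 * g z.2 p.2 ∂π ≤ ∫ p, g z.1 p.1 * g z.2 p.2 ∂π₀
  rw [K_eq hπ z.1 z.2, K_eq hc0 z.1 z.2]
  have h1 : (π {q : ℝ × ℝ | z.1 < q.1 ∧ z.2 < q.2}).toReal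
      ≤ (π₀ {q : ℝ × ℝ | z.1 < q.1 ∧ z.2 < q.2}).toReal := by
    refine (ENNReal.toReal_le_toReal (measure_ne_top π _) (measure_ne_top π₀ _)).2 ?_
    rw [hπ₀A z.1 z.2]
    exact coupling_set_le hπ z.1 z.2
  linarith
end

section
/- Let μ and ν be Borel probability measures on ℝ with quantile functions Q_μ and Q_ν, both with finite second moments. Then the minimum of ∫ a·b dπ(a,b) over all couplings π of μ and ν equals ∫₀¹ Q_μ(t) Q_ν(1−t) dt, attained by the countermonotonic coupling (Q_μ(ξ), Q_ν(1−ξ)) with ξ uniform on (0,1). -/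
open MeasureTheory Set ProbabilityTheory Filter
open scoped ENNReal

variable (μ : Measure ℝ) [IsProbabilityMeasure μ]

lemma quantile_le_iff {t : ℝ} (ht : t ∈ Set.Ioo (0:ℝ) 1) (x : ℝ) :
    quantile μ t ≤ x ↔ t ≤ cdf μ x := by
  have hS : {x : ℝ | t ≤ (μ (Iic x)).toReal} = {x : ℝ | t ≤ cdf μ x} := by
    ext y; simp [cdf_eq_real, measureReal_def]
  have hne : {x : ℝ | t ≤ cdf μ x}.Nonempty := by
    obtain ⟨x, hx⟩ := ((tendsto_cdf_atTop μ).eventually (eventually_ge_nhds ht.2)).exists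
    exact ⟨x, hx⟩
  have hbdd : BddBelow {x : ℝ | t ≤ cdf μ x} := by
    obtain ⟨x, hx⟩ := ((tendsto_cdf_atBot μ).eventually (eventually_lt_nhds ht.1)).exists
    exact ⟨x, fun y hy => le_of_not_gt fun hlt =>
      absurd (le_trans hy ((monotone_cdf μ) hlt.le)) (not_le.2 hx)⟩
  constructor
  · intro h
    set z := sInf {x : ℝ | t ≤ cdf μ x} with hz
    have hmem : t ≤ cdf μ z := by
      have hrc : Tendsto (cdf μ) (nhdsWithin z (Set.Ioi z)) (nhds (cdf μ z)) :=
        ((cdf μ).right_continuous z).tendsto.mono_left (nhdsWithin_mono z Ioi_subset_Ici_self)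
      refine ge_of_tendsto hrc (eventually_nhdsWithin_of_forall fun y hy => ?_)
      obtain ⟨s, hs, hsy⟩ := (csInf_lt_iff hbdd hne).mp hy
      exact le_trans hs ((monotone_cdf μ) hsy.le)
    have hq : quantile μ t = z := by rw [quantile, hS]
    calc t ≤ cdf μ (quantile μ t) := by rw [hq]; exact hmem
    _ ≤ cdf μ x := (monotone_cdf μ) h
  · intro h
    rw [quantile, hS]
    exact csInf_le hbdd h

lemma monotoneOn_quantile : MonotoneOn (quantile μ) (Set.Ioo (0:ℝ) 1) := by
  intro t ht s hs hts
  have h1 : s ≤ cdf μ (quantile μ s) := (quantile_le_iff μ hs _).mp le_rfl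
  exact (quantile_le_iff μ ht _).mpr (le_trans hts h1)

lemma aemeasurable_quantile :
    AEMeasurable (quantile μ) (volume.restrict (Set.Ioo (0:ℝ) 1)) :=
  aemeasurable_restrict_of_monotoneOn measurableSet_Ioo (monotoneOn_quantile μ)

instance : IsProbabilityMeasure (volume.restrict (Set.Ioo (0:ℝ) 1)) :=
  ⟨by simp⟩

lemma map_quantile : (volume.restrict (Set.Ioo (0:ℝ) 1)).map (quantile μ) = μ := by
  have hae := aemeasurable_quantile μ
  have : IsProbabilityMeasure ((volume.restrict (Set.Ioo (0:ℝ) 1)).map (quantile μ)) :=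
    Measure.isProbabilityMeasure_map hae
  refine Measure.ext_of_Iic _ _ (fun x => ?_)
  rw [Measure.map_apply_of_aemeasurable hae measurableSet_Iic,
    Measure.restrict_apply' measurableSet_Ioo]
  have hset : quantile μ ⁻¹' (Iic x) ∩ Set.Ioo 0 1 = Iic (cdf μ x) ∩ Set.Ioo 0 1 := by
    ext t
    simp only [Set.mem_inter_iff, Set.mem_preimage, Set.mem_Iic, and_congr_left_iff]
    intro ht
    exact quantile_le_iff μ ht x
  rw [hset, ← ofReal_cdf μ x]
  rcases lt_or_ge (cdf μ x) 1 with h1 | h1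
  · have : Iic (cdf μ x) ∩ Set.Ioo (0:ℝ) 1 = Set.Ioc 0 (cdf μ x) := by
      ext t; simp only [Set.mem_inter_iff, Set.mem_Iic, Set.mem_Ioo, Set.mem_Ioc]
      constructor
      · rintro ⟨h, h0, _⟩; exact ⟨h0, h⟩
      · rintro ⟨h0, h⟩; exact ⟨h, h0, lt_of_le_of_lt h h1⟩
    rw [this, Real.volume_Ioc, sub_zero]
  · have hc : cdf μ x = 1 := le_antisymm (cdf_le_one μ x) h1
    have : Iic (cdf μ x) ∩ Set.Ioo (0:ℝ) 1 = Set.Ioo 0 1 := by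
      rw [Set.inter_eq_right]; intro t ht; rw [hc]; exact Set.mem_Iic.2 ht.2.le
    rw [this, Real.volume_Ioo, hc]; norm_num

lemma reflect_preserving :
    MeasurePreserving (fun t : ℝ => 1 - t) (volume.restrict (Set.Ioo (0:ℝ) 1))
      (volume.restrict (Set.Ioo (0:ℝ) 1)) := by
  have h : MeasurePreserving (fun t : ℝ => 1 - t) volume volume :=
    Measure.measurePreserving_sub_left volume 1
  have hpre : (fun t : ℝ => 1 - t) ⁻¹' (Set.Ioo 0 1) = Set.Ioo 0 1 := by
    ext t; simp only [Set.mem_preimage, Set.mem_Ioo]; constructor <;> rintro ⟨h1, h2⟩ <;>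
      constructor <;> linarith
  have := h.restrict_preimage (measurableSet_Ioo (a := (0:ℝ)) (b := 1))
  rwa [hpre] at this

variable (ν : Measure ℝ) [IsProbabilityMeasure ν]

noncomputable def cmMap : ℝ → ℝ × ℝ := fun t => (quantile μ t, quantile ν (1 - t))

lemma aemeasurable_q2 :
    AEMeasurable (fun t => quantile ν (1 - t)) (volume.restrict (Set.Ioo (0:ℝ) 1)) := by
  have h1 : AEMeasurable (quantile ν)
      ((volume.restrict (Set.Ioo (0:ℝ) 1)).map (fun t : ℝ => 1 - t)) := by
    rw [(reflect_preserving).map_eq]; exact aemeasurable_quantile ν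
  exact h1.comp_aemeasurable (reflect_preserving).aemeasurable

lemma aemeasurable_cmMap :
    AEMeasurable (cmMap μ ν) (volume.restrict (Set.Ioo (0:ℝ) 1)) :=
  (aemeasurable_quantile μ).prodMk (aemeasurable_q2 ν)

lemma map_q2 : (volume.restrict (Set.Ioo (0:ℝ) 1)).map (fun t => quantile ν (1 - t)) = ν := by
  have h1 : AEMeasurable (quantile ν)
      ((volume.restrict (Set.Ioo (0:ℝ) 1)).map (fun t : ℝ => 1 - t)) := by
    rw [(reflect_preserving).map_eq]; exact aemeasurable_quantile ν
  have := (AEMeasurable.map_map_of_aemeasurable h1 (reflect_preserving).aemeasurable).symm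
  rw [(reflect_preserving).map_eq, map_quantile] at this
  exact this

lemma cm_marginal_fst :
    ((volume.restrict (Set.Ioo (0:ℝ) 1)).map (cmMap μ ν)).map Prod.fst = μ := by
  rw [AEMeasurable.map_map_of_aemeasurable
    (measurable_fst.aemeasurable) (aemeasurable_cmMap μ ν)]
  exact map_quantile μ

lemma cm_marginal_snd :
    ((volume.restrict (Set.Ioo (0:ℝ) 1)).map (cmMap μ ν)).map Prod.snd = ν := by
  rw [AEMeasurable.map_map_of_aemeasurable
    (measurable_snd.aemeasurable) (aemeasurable_cmMap μ ν)]
  exact map_q2 ν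

lemma cm_integral :
    (∫ p, p.1 * p.2 ∂((volume.restrict (Set.Ioo (0:ℝ) 1)).map (cmMap μ ν)))
      = ∫ t in Set.Ioo (0:ℝ) 1, quantile μ t * quantile ν (1 - t) := by
  rw [integral_map (f := fun p : ℝ × ℝ => p.1 * p.2) (aemeasurable_cmMap μ ν)
    ((measurable_fst.mul measurable_snd).aestronglyMeasurable)]
  rfl

/-! ### The auxiliary function `gg` -/

noncomputable def gg (x a : ℝ) : ℝ := (if x < a then 1 else 0) - (if x < 0 then 1 else 0)

lemma gg_meas : Measurable (fun q : ℝ × ℝ => gg q.1 q.2) := by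
  unfold gg
  exact (Measurable.ite (measurableSet_lt measurable_fst measurable_snd) measurable_const
    measurable_const).sub
    (Measurable.ite (measurableSet_lt measurable_fst measurable_const) measurable_const
    measurable_const)

lemma gg_eq_nonneg {a : ℝ} (ha : 0 ≤ a) (x : ℝ) :
    gg x a = (Set.Ico (0:ℝ) a).indicator (fun _ => (1:ℝ)) x := by
  simp only [gg, Set.indicator_apply, Set.mem_Ico]
  rcases lt_or_ge x 0 with h2 | h2
  · have h1 : x < a := lt_of_lt_of_le h2 ha
    rw [if_pos h1, if_pos h2, if_neg (by rintro ⟨h, _⟩; linarith)]; ring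
  · rw [if_neg (not_lt.2 h2)]
    by_cases h1 : x < a
    · rw [if_pos h1, if_pos ⟨h2, h1⟩]; ring
    · rw [if_neg h1, if_neg (by rintro ⟨_, h⟩; exact h1 h)]; ring

lemma gg_eq_neg {a : ℝ} (ha : a < 0) (x : ℝ) :
    gg x a = -((Set.Ico a (0:ℝ)).indicator (fun _ => (1:ℝ)) x) := by
  simp only [gg, Set.indicator_apply, Set.mem_Ico]
  rcases lt_or_ge x a with h1 | h1
  · have h2 : x < 0 := lt_trans h1 ha
    rw [if_pos h1, if_pos h2, if_neg (by rintro ⟨h, _⟩; linarith)]; ring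
  · rw [if_neg (not_lt.2 h1)]
    by_cases h2 : x < 0
    · rw [if_pos h2, if_pos ⟨h1, h2⟩]; ring
    · rw [if_neg h2, if_neg (by rintro ⟨_, h⟩; exact h2 h)]; ring

lemma gg_abs_nonneg {a : ℝ} (ha : 0 ≤ a) (x : ℝ) : |gg x a| = gg x a := by
  rw [gg_eq_nonneg ha x]
  simp only [Set.indicator_apply]; split_ifs <;> norm_num

lemma gg_abs_neg {a : ℝ} (ha : a < 0) (x : ℝ) : |gg x a| = -gg x a := by
  rw [gg_eq_neg ha x]
  simp only [Set.indicator_apply]; split_ifs <;> norm_num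

lemma integrable_gg (a : ℝ) : Integrable (fun x => gg x a) volume := by
  rcases le_or_gt 0 a with ha | ha
  · rw [show (fun x => gg x a) = (Set.Ico (0:ℝ) a).indicator (fun _ => (1:ℝ)) from
      funext (gg_eq_nonneg ha)]
    rw [integrable_indicator_iff measurableSet_Ico]
    exact integrableOn_const (by rw [Real.volume_Ico]; exact ENNReal.ofReal_ne_top)
  · rw [show (fun x => gg x a) = fun x => -((Set.Ico a (0:ℝ)).indicator (fun _ => (1:ℝ)) x) from
      funext (gg_eq_neg ha)]
    refine Integrable.neg ?_
    rw [integrable_indicator_iff measurableSet_Ico]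
    exact integrableOn_const (by rw [Real.volume_Ico]; exact ENNReal.ofReal_ne_top)

lemma integral_gg (a : ℝ) : ∫ x, gg x a = a := by
  rcases le_or_gt 0 a with ha | ha
  · rw [show (fun x => gg x a) = (Set.Ico (0:ℝ) a).indicator (fun _ => (1:ℝ)) from
      funext (gg_eq_nonneg ha)]
    rw [show (Set.Ico (0:ℝ) a).indicator (fun _ => (1:ℝ)) = (Set.Ico (0:ℝ) a).indicator 1 from rfl]
    rw [integral_indicator_one measurableSet_Ico, measureReal_def, Real.volume_Ico,
      ENNReal.toReal_ofReal (by linarith)]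
    ring
  · rw [show (fun x => gg x a) = fun x => -((Set.Ico a (0:ℝ)).indicator (fun _ => (1:ℝ)) x) from
      funext (gg_eq_neg ha)]
    rw [integral_neg]
    rw [show (fun x => (Set.Ico a (0:ℝ)).indicator (fun _ => (1:ℝ)) x) = (Set.Ico a (0:ℝ)).indicator 1 from rfl]
    rw [integral_indicator_one measurableSet_Ico, measureReal_def, Real.volume_Ico,
      ENNReal.toReal_ofReal (by linarith)]
    ring

lemma integral_abs_gg (a : ℝ) : ∫ x, |gg x a| = |a| := by
  rcases le_or_gt 0 a with ha | ha
  · rw [show (fun x => |gg x a|) = fun x => gg x a from funext (gg_abs_nonneg ha)]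
    rw [integral_gg, abs_of_nonneg ha]
  · rw [show (fun x => |gg x a|) = fun x => -gg x a from funext (gg_abs_neg ha)]
    rw [integral_neg, integral_gg, abs_of_neg ha]

lemma slice_int (a b : ℝ) :
    Integrable (fun z : ℝ × ℝ => gg z.1 a * gg z.2 b) (volume.prod volume) :=
  (integrable_gg a).mul_prod (integrable_gg b)

lemma slice_val (a b : ℝ) :
    ∫ z : ℝ × ℝ, gg z.1 a * gg z.2 b ∂(volume.prod volume) = a * b := by
  rw [integral_prod_mul (f := fun x => gg x a) (g := fun y => gg y b), integral_gg, integral_gg]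

lemma slice_abs (a b : ℝ) :
    ∫ z : ℝ × ℝ, ‖gg z.1 a * gg z.2 b‖ ∂(volume.prod volume) = |a| * |b| := by
  simp_rw [norm_mul, Real.norm_eq_abs]
  rw [integral_prod_mul (f := fun x => |gg x a|) (g := fun y => |gg y b|),
    integral_abs_gg, integral_abs_gg]

/-! ### Couplings -/

lemma isProbabilityMeasure_of_coupling {π : Measure (ℝ × ℝ)} (hc : IsCoupling π μ ν) :
    IsProbabilityMeasure π := by
  have h := Measure.map_apply (μ := π) measurable_fst MeasurableSet.univ
  rw [hc.1, Set.preimage_univ] at h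
  exact ⟨by rw [← h, measure_univ]⟩

lemma coupling_integrable_mul {π : Measure (ℝ × ℝ)} (hc : IsCoupling π μ ν)
    (hμ2 : MemLp id 2 μ) (hν2 : MemLp id 2 ν) :
    Integrable (fun p : ℝ × ℝ => p.1 * p.2) π := by
  haveI := isProbabilityMeasure_of_coupling μ ν hc
  have h1 : MemLp (fun p : ℝ × ℝ => p.1) 2 π := by
    rw [← hc.1] at hμ2
    have := (memLp_map_measure_iff (by rw [hc.1]; exact aestronglyMeasurable_id)
      measurable_fst.aemeasurable).mp hμ2
    exact this
  have h2 : MemLp (fun p : ℝ × ℝ => p.2) 2 π := by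
    rw [← hc.2] at hν2
    have := (memLp_map_measure_iff (by rw [hc.2]; exact aestronglyMeasurable_id)
      measurable_snd.aemeasurable).mp hν2
    exact this
  have h3 : MemLp ((fun p : ℝ × ℝ => p.1) • (fun p : ℝ × ℝ => p.2)) 1 π :=
    MemLp.smul h2 h1 (hpqr := ⟨by rw [inv_one]; exact ENNReal.inv_two_add_inv_two⟩)
  rw [memLp_one_iff_integrable] at h3
  exact h3.congr (Filter.Eventually.of_forall (fun p => by simp [Pi.smul_apply', smul_eq_mul]))

lemma H_integrable {π : Measure (ℝ × ℝ)} (hc : IsCoupling π μ ν)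
    (hint : Integrable (fun p : ℝ × ℝ => p.1 * p.2) π) :
    Integrable (fun w : (ℝ × ℝ) × (ℝ × ℝ) => gg w.2.1 w.1.1 * gg w.2.2 w.1.2)
      (π.prod (volume.prod volume)) := by
  haveI := isProbabilityMeasure_of_coupling μ ν hc
  have hm : Measurable (fun w : (ℝ × ℝ) × (ℝ × ℝ) => gg w.2.1 w.1.1 * gg w.2.2 w.1.2) :=
    (gg_meas.comp ((measurable_snd.fst).prodMk (measurable_fst.fst))).mul
      (gg_meas.comp ((measurable_snd.snd).prodMk (measurable_fst.snd)))
  refine (integrable_prod_iff hm.aestronglyMeasurable).mpr ⟨?_, ?_⟩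
  · exact Filter.Eventually.of_forall (fun p => slice_int p.1 p.2)
  · have heq : (fun p : ℝ × ℝ => ∫ z : ℝ × ℝ, ‖gg z.1 p.1 * gg z.2 p.2‖ ∂(volume.prod volume))
        = fun p : ℝ × ℝ => |p.1 * p.2| := by
      funext p; rw [slice_abs, abs_mul]
    rw [heq]
    exact hint.abs

noncomputable def survReal (π : Measure (ℝ × ℝ)) (z : ℝ × ℝ) : ℝ :=
  (π (Set.Ioi z.1 ×ˢ Set.Ioi z.2)).toReal

noncomputable def remainder (z : ℝ × ℝ) : ℝ :=
  -(if z.2 < 0 then (1:ℝ) else 0) * (1 - cdf μ z.1)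
    - (if z.1 < 0 then (1:ℝ) else 0) * (1 - cdf ν z.2)
    + (if z.1 < 0 then (1:ℝ) else 0) * (if z.2 < 0 then (1:ℝ) else 0)

lemma toReal_Ioi (x : ℝ) : (μ (Set.Ioi x)).toReal = 1 - cdf μ x := by
  have h : Set.Ioi x = (Set.Iic x)ᶜ := by ext t; simp
  rw [h, measure_compl measurableSet_Iic (measure_ne_top μ _), measure_univ,
    ENNReal.toReal_sub_of_le prob_le_one ENNReal.one_ne_top, ENNReal.toReal_one,
    cdf_eq_real, measureReal_def]

lemma inner_val {π : Measure (ℝ × ℝ)} (hc : IsCoupling π μ ν) (z : ℝ × ℝ) :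
    ∫ p, gg z.1 p.1 * gg z.2 p.2 ∂π = survReal π z + remainder μ ν z := by
  haveI := isProbabilityMeasure_of_coupling μ ν hc
  set c : ℝ := if z.1 < 0 then 1 else 0 with hcdef
  set d : ℝ := if z.2 < 0 then 1 else 0 with hddef
  have hpt : ∀ p : ℝ × ℝ, gg z.1 p.1 * gg z.2 p.2 =
      (Set.Ioi z.1 ×ˢ Set.Ioi z.2).indicator 1 p
        - d * (Set.Ioi z.1 ×ˢ (Set.univ : Set ℝ)).indicator 1 p
        - c * ((Set.univ : Set ℝ) ×ˢ Set.Ioi z.2).indicator 1 p + c * d := by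
    intro p
    simp only [gg, Set.indicator_apply, Set.mem_prod, Set.mem_Ioi, Set.mem_univ, and_true,
      true_and, Pi.one_apply]
    by_cases h1 : z.1 < p.1 <;> by_cases h2 : z.2 < p.2 <;>
      simp only [h1, h2, if_true, if_false, and_self, if_neg, if_pos, true_and, and_true,
        false_and, and_false] <;> ring
  have iT : Integrable ((Set.Ioi z.1 ×ˢ Set.Ioi z.2).indicator (1 : ℝ × ℝ → ℝ)) π :=
    (integrable_const (1:ℝ)).indicator (measurableSet_Ioi.prod measurableSet_Ioi)
  have iA : Integrable ((Set.Ioi z.1 ×ˢ (Set.univ : Set ℝ)).indicator (1 : ℝ × ℝ → ℝ)) π :=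
    (integrable_const (1:ℝ)).indicator (measurableSet_Ioi.prod MeasurableSet.univ)
  have iB : Integrable (((Set.univ : Set ℝ) ×ˢ Set.Ioi z.2).indicator (1 : ℝ × ℝ → ℝ)) π :=
    (integrable_const (1:ℝ)).indicator (MeasurableSet.univ.prod measurableSet_Ioi)
  calc ∫ p, gg z.1 p.1 * gg z.2 p.2 ∂π
      = ∫ p, ((Set.Ioi z.1 ×ˢ Set.Ioi z.2).indicator 1 p
          - d * (Set.Ioi z.1 ×ˢ (Set.univ : Set ℝ)).indicator 1 p
          - c * ((Set.univ : Set ℝ) ×ˢ Set.Ioi z.2).indicator 1 p + c * d) ∂π := by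
        exact integral_congr_ae (Filter.Eventually.of_forall hpt)
    _ = (π (Set.Ioi z.1 ×ˢ Set.Ioi z.2)).toReal
          - d * (π (Set.Ioi z.1 ×ˢ (Set.univ : Set ℝ))).toReal
          - c * (π ((Set.univ : Set ℝ) ×ˢ Set.Ioi z.2)).toReal + c * d := by
        rw [integral_add (f := fun p => (Set.Ioi z.1 ×ˢ Set.Ioi z.2).indicator 1 p
              - d * (Set.Ioi z.1 ×ˢ (Set.univ : Set ℝ)).indicator 1 p
              - c * ((Set.univ : Set ℝ) ×ˢ Set.Ioi z.2).indicator 1 p)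
            (g := fun _ => c * d)
            ((iT.sub (iA.const_mul d)).sub (iB.const_mul c)) (integrable_const _),
          integral_sub (f := fun p => (Set.Ioi z.1 ×ˢ Set.Ioi z.2).indicator 1 p
              - d * (Set.Ioi z.1 ×ˢ (Set.univ : Set ℝ)).indicator 1 p)
            (g := fun p => c * ((Set.univ : Set ℝ) ×ˢ Set.Ioi z.2).indicator 1 p)
            (iT.sub (iA.const_mul d)) (iB.const_mul c),
          integral_sub (f := fun p => (Set.Ioi z.1 ×ˢ Set.Ioi z.2).indicator 1 p)
            (g := fun p => d * (Set.Ioi z.1 ×ˢ (Set.univ : Set ℝ)).indicator 1 p)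
            iT (iA.const_mul d),
          integral_const_mul, integral_const_mul,
          integral_indicator_one (measurableSet_Ioi.prod measurableSet_Ioi),
          integral_indicator_one (measurableSet_Ioi.prod MeasurableSet.univ),
          integral_indicator_one (MeasurableSet.univ.prod measurableSet_Ioi),
          integral_const, probReal_univ, one_smul, measureReal_def, measureReal_def, measureReal_def]
    _ = survReal π z + remainder μ ν z := by
        have hA : π (Set.Ioi z.1 ×ˢ (Set.univ : Set ℝ)) = μ (Set.Ioi z.1) := by
          rw [← hc.1, Measure.map_apply measurable_fst measurableSet_Ioi, Set.prod_univ]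
        have hB : π ((Set.univ : Set ℝ) ×ˢ Set.Ioi z.2) = ν (Set.Ioi z.2) := by
          rw [← hc.2, Measure.map_apply measurable_snd measurableSet_Ioi, Set.univ_prod]
        rw [hA, hB, toReal_Ioi μ, toReal_Ioi ν]
        simp only [survReal, remainder, ← hcdef, ← hddef]
        ring

lemma coupling_repr {π : Measure (ℝ × ℝ)} (hc : IsCoupling π μ ν)
    (hint : Integrable (fun p : ℝ × ℝ => p.1 * p.2) π) :
    ∫ p, p.1 * p.2 ∂π
      = ∫ z : ℝ × ℝ, (survReal π z + remainder μ ν z) ∂(volume.prod volume) := by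
  haveI := isProbabilityMeasure_of_coupling μ ν hc
  have h1 : ∫ p, p.1 * p.2 ∂π
      = ∫ p : ℝ × ℝ, ∫ z : ℝ × ℝ, gg z.1 p.1 * gg z.2 p.2 ∂(volume.prod volume) ∂π := by
    refine integral_congr_ae (Filter.Eventually.of_forall (fun p => ?_))
    exact (slice_val p.1 p.2).symm
  have hH' : Integrable (Function.uncurry (fun p z : ℝ × ℝ => gg z.1 p.1 * gg z.2 p.2))
      (π.prod (volume.prod volume)) := H_integrable μ ν hc hint
  have hswap := integral_integral_swap hH'
  rw [h1, hswap]
  refine integral_congr_ae (Filter.Eventually.of_forall (fun z => ?_))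
  exact inner_val μ ν hc z

lemma repr_integrable {π : Measure (ℝ × ℝ)} (hc : IsCoupling π μ ν)
    (hint : Integrable (fun p : ℝ × ℝ => p.1 * p.2) π) :
    Integrable (fun z : ℝ × ℝ => survReal π z + remainder μ ν z) (volume.prod volume) := by
  haveI := isProbabilityMeasure_of_coupling μ ν hc
  have h := (H_integrable μ ν hc hint).integral_prod_right
  refine h.congr (Filter.Eventually.of_forall (fun z => ?_))
  simpa using inner_val μ ν hc z

lemma surv_lb {π : Measure (ℝ × ℝ)} (hc : IsCoupling π μ ν) (z : ℝ × ℝ) :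
    max (1 - cdf ν z.2 - cdf μ z.1) 0 ≤ survReal π z := by
  haveI := isProbabilityMeasure_of_coupling μ ν hc
  refine max_le ?_ ENNReal.toReal_nonneg
  have hsub : (Set.Ioi z.1 ×ˢ (Set.univ : Set ℝ))
      ⊆ (Set.Ioi z.1 ×ˢ Set.Ioi z.2) ∪ ((Set.univ : Set ℝ) ×ˢ Set.Iic z.2) := by
    rintro ⟨a, b⟩ ⟨ha, -⟩
    rcases le_or_gt b z.2 with hb | hb
    · exact Or.inr ⟨Set.mem_univ a, hb⟩
    · exact Or.inl ⟨ha, hb⟩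
  have h1 : μ (Set.Ioi z.1) ≤ π (Set.Ioi z.1 ×ˢ Set.Ioi z.2) + ν (Set.Iic z.2) := by
    have hA : π (Set.Ioi z.1 ×ˢ (Set.univ : Set ℝ)) = μ (Set.Ioi z.1) := by
      rw [← hc.1, Measure.map_apply measurable_fst measurableSet_Ioi, Set.prod_univ]
    have hB : π ((Set.univ : Set ℝ) ×ˢ Set.Iic z.2) = ν (Set.Iic z.2) := by
      rw [← hc.2, Measure.map_apply measurable_snd measurableSet_Iic, Set.univ_prod]
    calc μ (Set.Ioi z.1) = π (Set.Ioi z.1 ×ˢ (Set.univ : Set ℝ)) := hA.symm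
      _ ≤ π ((Set.Ioi z.1 ×ˢ Set.Ioi z.2) ∪ ((Set.univ : Set ℝ) ×ˢ Set.Iic z.2)) :=
          measure_mono hsub
      _ ≤ π (Set.Ioi z.1 ×ˢ Set.Ioi z.2) + π ((Set.univ : Set ℝ) ×ˢ Set.Iic z.2) :=
          measure_union_le _ _
      _ = π (Set.Ioi z.1 ×ˢ Set.Ioi z.2) + ν (Set.Iic z.2) := by rw [hB]
  have h2 : (μ (Set.Ioi z.1)).toReal ≤ survReal π z + (ν (Set.Iic z.2)).toReal := by
    have hfin : π (Set.Ioi z.1 ×ˢ Set.Ioi z.2) + ν (Set.Iic z.2) ≠ ⊤ :=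
      ENNReal.add_ne_top.mpr ⟨measure_ne_top _ _, measure_ne_top _ _⟩
    have := ENNReal.toReal_mono hfin h1
    rwa [ENNReal.toReal_add (measure_ne_top _ _) (measure_ne_top _ _)] at this
  rw [toReal_Ioi μ] at h2
  rw [← measureReal_def, ← cdf_eq_real] at h2
  linarith

lemma surv_cm (z : ℝ × ℝ) :
    survReal ((volume.restrict (Set.Ioo (0:ℝ) 1)).map (cmMap μ ν)) z
      = max (1 - cdf ν z.2 - cdf μ z.1) 0 := by
  have hq : ((volume.restrict (Set.Ioo (0:ℝ) 1)).map (cmMap μ ν)) (Set.Ioi z.1 ×ˢ Set.Ioi z.2)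
      = ENNReal.ofReal (1 - cdf ν z.2 - cdf μ z.1) := by
    rw [Measure.map_apply_of_aemeasurable (aemeasurable_cmMap μ ν)
      (measurableSet_Ioi.prod measurableSet_Ioi),
      Measure.restrict_apply' measurableSet_Ioo]
    have hset : cmMap μ ν ⁻¹' (Set.Ioi z.1 ×ˢ Set.Ioi z.2) ∩ Set.Ioo 0 1
        = Set.Ioo (cdf μ z.1) (1 - cdf ν z.2) := by
      ext t
      simp only [Set.mem_inter_iff, Set.mem_preimage, cmMap, Set.mem_prod, Set.mem_Ioi,
        Set.mem_Ioo]
      constructor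
      · rintro ⟨⟨h1, h2⟩, ht⟩
        have ht' : 1 - t ∈ Set.Ioo (0:ℝ) 1 := ⟨by linarith [ht.2], by linarith [ht.1]⟩
        have e1 : ¬ (quantile μ t ≤ z.1) := not_le.2 h1
        rw [quantile_le_iff μ ht] at e1
        have e2 : ¬ (quantile ν (1 - t) ≤ z.2) := not_le.2 h2
        rw [quantile_le_iff ν ht'] at e2
        exact ⟨not_le.1 e1, by linarith [not_le.1 e2]⟩
      · rintro ⟨h1, h2⟩
        have ht : t ∈ Set.Ioo (0:ℝ) 1 :=
          ⟨lt_of_le_of_lt (cdf_nonneg μ z.1) h1, by linarith [cdf_nonneg ν z.2]⟩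
        have ht' : 1 - t ∈ Set.Ioo (0:ℝ) 1 := ⟨by linarith [ht.2], by linarith [ht.1]⟩
        refine ⟨⟨?_, ?_⟩, ht⟩
        · exact not_le.1 (fun h => absurd ((quantile_le_iff μ ht z.1).mp h) (not_le.2 h1))
        · exact not_le.1 (fun h => absurd ((quantile_le_iff ν ht' z.2).mp h)
            (not_le.2 (by linarith)))
    rw [hset, Real.volume_Ioo]
  rw [survReal, hq]
  rcases le_or_gt (1 - cdf ν z.2 - cdf μ z.1) 0 with h | h
  · rw [ENNReal.ofReal_eq_zero.mpr h, max_eq_right h, ENNReal.toReal_zero]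
  · rw [ENNReal.toReal_ofReal h.le, max_eq_left h.le]

lemma lower_bound (hμ2 : MemLp id 2 μ) (hν2 : MemLp id 2 ν) {π : Measure (ℝ × ℝ)}
    (hc : IsCoupling π μ ν) :
    (∫ t in Set.Ioo (0:ℝ) 1, quantile μ t * quantile ν (1 - t)) ≤ ∫ p, p.1 * p.2 ∂π := by
  set π₀ := (volume.restrict (Set.Ioo (0:ℝ) 1)).map (cmMap μ ν) with hπ₀
  have hc0 : IsCoupling π₀ μ ν := ⟨cm_marginal_fst μ ν, cm_marginal_snd μ ν⟩
  have hint := coupling_integrable_mul μ ν hc hμ2 hν2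
  have hint0 := coupling_integrable_mul μ ν hc0 hμ2 hν2
  rw [← cm_integral μ ν]
  rw [coupling_repr μ ν hc hint, coupling_repr μ ν hc0 hint0]
  have hdiff : 0 ≤ ∫ z : ℝ × ℝ,
      ((survReal π z + remainder μ ν z) - (survReal π₀ z + remainder μ ν z))
        ∂(volume.prod volume) := by
    refine integral_nonneg (fun z => ?_)
    rw [Pi.zero_apply, sub_nonneg]
    exact (add_le_add_iff_right _).mpr (by rw [surv_cm μ ν z]; exact surv_lb μ ν hc z)
  rw [integral_sub (repr_integrable μ ν hc hint) (repr_integrable μ ν hc0 hint0)] at hdiff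
  linarith


/-- Lower Hoeffding–Fréchet bound: the minimum of `∫ a·b dπ` over couplings of `μ`
and `ν` equals `∫₀¹ Q_μ(t) Q_ν(1−t) dt`, attained by the countermonotonic coupling. -/
theorem stmt1 (μ ν : Measure ℝ) [IsProbabilityMeasure μ] [IsProbabilityMeasure ν]
    (hμ2 : MemLp id 2 μ) (hν2 : MemLp id 2 ν) :
    IsLeast ((fun π : Measure (ℝ × ℝ) => ∫ p, p.1 * p.2 ∂π) '' {π | IsCoupling π μ ν})
      (∫ t in Ioo (0:ℝ) 1, quantile μ t * quantile ν (1 - t)) ∧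
    IsCoupling ((volume.restrict (Ioo (0:ℝ) 1)).map
      (fun t => (quantile μ t, quantile ν (1 - t)))) μ ν ∧
    (∫ p, p.1 * p.2
        ∂((volume.restrict (Ioo (0:ℝ) 1)).map
          (fun t => (quantile μ t, quantile ν (1 - t)))))
      = ∫ t in Ioo (0:ℝ) 1, quantile μ t * quantile ν (1 - t) := by
  refine ⟨⟨⟨(volume.restrict (Ioo (0:ℝ) 1)).map (cmMap μ ν),
    ⟨cm_marginal_fst μ ν, cm_marginal_snd μ ν⟩, cm_integral μ ν⟩, ?_⟩,
    ⟨cm_marginal_fst μ ν, cm_marginal_snd μ ν⟩, cm_integral μ ν⟩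
  rintro v ⟨π, hcπ, rfl⟩
  exact lower_bound μ ν hμ2 hν2 hcπ
end

section
/- Let μ be the uniform distribution on (0, 1/2] (the conditional law of U given W=1 when p ≡ 1/2), and let ω(u) = 1 on (0,1/4], = 1/2 on (1/4, 3/4], = 0 on (3/4, 1]. Let Q be the quantile function of a probability measure ρ on [y_min, y_max]. Then the countermonotonic OT value plus the trivial tail contribution equals ∫₀^{1/2} Q(2u) ω(u) du + ∫_{1/2}^1 y_min ω(u) du = (1/4)·𝔼_ρ[Y] + (1/8)·(2∫₀^{1/2} Q(s) ds) + (1/8)·y_min, i.e., (1/4) 𝔼_ρ[Y] + (1/8) CVaR_{0.5}(ρ) + (1/8) y_min, where CVaR_α(ρ) = (1/α) ∫₀^α Q(s) ds. -/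
open MeasureTheory Set

section Aux

open ProbabilityTheory

variable {ymin ymax : ℝ} {ρ : Measure ℝ} [IsProbabilityMeasure ρ]

lemma quantile_eq_cdf (t : ℝ) : quantile ρ t = sInf {x : ℝ | t ≤ cdf ρ x} := by
  simp only [quantile, cdf_eq_real, measureReal_def]

lemma cdf_ymax (hsupp : ρ (Icc ymin ymax)ᶜ = 0) : cdf ρ ymax = 1 := by
  have h1 : ρ (Iic ymax) = 1 := by
    rw [← prob_compl_eq_zero_iff measurableSet_Iic, compl_Iic]
    refine measure_mono_null (fun y hy => ?_) hsupp
    simp only [mem_compl_iff, mem_Icc, not_and_or]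
    exact Or.inr (not_le.2 hy)
  rw [cdf_eq_real, measureReal_def, h1, ENNReal.toReal_one]

lemma bddBelow_quantile_set (hsupp : ρ (Icc ymin ymax)ᶜ = 0) {s : ℝ} (hs : 0 < s) :
    ymin ∈ lowerBounds {x : ℝ | s ≤ cdf ρ x} := by
  intro x hx
  by_contra h
  push_neg at h
  have h0 : ρ (Iic x) = 0 := by
    refine measure_mono_null (fun y hy => ?_) hsupp
    simp only [mem_compl_iff, mem_Icc, not_and_or]
    exact Or.inl (not_le.2 (lt_of_le_of_lt hy h))
  have : cdf ρ x = 0 := by rw [cdf_eq_real, measureReal_def, h0, ENNReal.toReal_zero]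
  simp only [mem_setOf_eq, this] at hx
  exact absurd hx (not_le.2 hs)

lemma quantile_le_iff_s16 (hsupp : ρ (Icc ymin ymax)ᶜ = 0) {s : ℝ} (hs : 0 < s) (hs1 : s ≤ 1)
    (x : ℝ) : quantile ρ s ≤ x ↔ s ≤ cdf ρ x := by
  have hbdd : BddBelow {x : ℝ | s ≤ cdf ρ x} := ⟨ymin, bddBelow_quantile_set hsupp hs⟩
  have hne : {x : ℝ | s ≤ cdf ρ x}.Nonempty := ⟨ymax, by simp [cdf_ymax hsupp, hs1]⟩
  rw [quantile_eq_cdf]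
  constructor
  · intro hle
    have hkey : s ≤ cdf ρ (sInf {x : ℝ | s ≤ cdf ρ x}) := by
      set a := sInf {x : ℝ | s ≤ cdf ρ x} with ha
      have htend : Filter.Tendsto (cdf ρ) (nhdsWithin a (Ioi a)) (nhds (cdf ρ a)) :=
        ((cdf ρ).right_continuous a).mono_left (nhdsWithin_mono _ Ioi_subset_Ici_self)
      refine ge_of_tendsto htend ?_
      filter_upwards [eventually_mem_nhdsWithin] with y hy
      obtain ⟨t, ht, hty⟩ := (csInf_lt_iff hbdd hne).1 (hy : a < y)
      exact le_trans ht ((monotone_cdf (μ := ρ)) hty.le)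
    exact le_trans hkey ((monotone_cdf (μ := ρ)) hle)
  · intro hx
    exact csInf_le hbdd hx

lemma quantile_mem (hsupp : ρ (Icc ymin ymax)ᶜ = 0) {s : ℝ} (hs : 0 < s) (hs1 : s ≤ 1) :
    ymin ≤ quantile ρ s ∧ quantile ρ s ≤ ymax := by
  have hbdd : BddBelow {x : ℝ | s ≤ cdf ρ x} := ⟨ymin, bddBelow_quantile_set hsupp hs⟩
  constructor
  · rw [quantile_eq_cdf]
    exact le_csInf ⟨ymax, by simp [cdf_ymax hsupp, hs1]⟩ (bddBelow_quantile_set hsupp hs)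
  · exact (quantile_le_iff_s16 hsupp hs hs1 ymax).2 (by simp [cdf_ymax hsupp, hs1])

lemma quantile_monotoneOn (hsupp : ρ (Icc ymin ymax)ᶜ = 0) :
    MonotoneOn (quantile ρ) (Ioc (0:ℝ) 1) := by
  intro s hs t ht hst
  rw [quantile_eq_cdf, quantile_eq_cdf]
  exact csInf_le_csInf ⟨ymin, bddBelow_quantile_set hsupp hs.1⟩
    ⟨ymax, by simp [cdf_ymax hsupp, ht.2]⟩ (fun x hx => le_trans hst hx)

lemma quantile_aemeasurable (hsupp : ρ (Icc ymin ymax)ᶜ = 0) :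
    AEMeasurable (quantile ρ) (volume.restrict (Ioc (0:ℝ) 1)) :=
  aemeasurable_restrict_of_monotoneOn measurableSet_Ioc (quantile_monotoneOn hsupp)

lemma quantile_integrableOn (hsupp : ρ (Icc ymin ymax)ᶜ = 0) :
    IntegrableOn (quantile ρ) (Ioc (0:ℝ) 1) volume := by
  refine ⟨(quantile_aemeasurable hsupp).aestronglyMeasurable, ?_⟩
  refine HasFiniteIntegral.restrict_of_bounded (C := max |ymin| |ymax|)
    (by simp [Real.volume_Ioc]) ?_
  rw [ae_restrict_iff' measurableSet_Ioc]
  filter_upwards with s hs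
  obtain ⟨h1, h2⟩ := quantile_mem hsupp hs.1 hs.2
  rw [Real.norm_eq_abs, abs_le]
  constructor
  · calc -(max |ymin| |ymax|) ≤ -|ymin| := by simp [le_max_left]
      _ ≤ ymin := neg_abs_le _
      _ ≤ quantile ρ s := h1
  · calc quantile ρ s ≤ ymax := h2
      _ ≤ |ymax| := le_abs_self _
      _ ≤ max |ymin| |ymax| := le_max_right _ _

lemma quantile_map (hsupp : ρ (Icc ymin ymax)ᶜ = 0) :
    (volume.restrict (Ioc (0:ℝ) 1)).map (quantile ρ) = ρ := by
  have hae := quantile_aemeasurable (ymin := ymin) (ymax := ymax) hsupp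
  haveI : IsFiniteMeasure ((volume.restrict (Ioc (0:ℝ) 1)).map (quantile ρ)) := by
    constructor
    rw [Measure.map_apply_of_aemeasurable hae MeasurableSet.univ]
    simp [Real.volume_Ioc]
  refine Measure.ext_of_Iic _ _ (fun x => ?_)
  rw [Measure.map_apply_of_aemeasurable hae measurableSet_Iic,
    Measure.restrict_apply' measurableSet_Ioc]
  have hset : quantile ρ ⁻¹' Iic x ∩ Ioc (0:ℝ) 1 = Ioc 0 (min (cdf ρ x) 1) := by
    ext s
    simp only [mem_inter_iff, mem_preimage, mem_Iic, mem_Ioc, le_min_iff]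
    constructor
    · rintro ⟨hq, hs0, hs1⟩
      exact ⟨hs0, (quantile_le_iff_s16 hsupp hs0 hs1 x).1 hq, hs1⟩
    · rintro ⟨hs0, hscdf, hs1⟩
      exact ⟨(quantile_le_iff_s16 hsupp hs0 hs1 x).2 hscdf, hs0, hs1⟩
  rw [hset, Real.volume_Ioc]
  have h1 : min (cdf ρ x) 1 = cdf ρ x := min_eq_left (cdf_le_one (μ := ρ) x)
  rw [h1, sub_zero, ofReal_cdf]

lemma integral_quantile (hsupp : ρ (Icc ymin ymax)ᶜ = 0) :
    ∫ x, x ∂ρ = ∫ s in Ioc (0:ℝ) 1, quantile ρ s := by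
  conv_lhs => rw [← quantile_map (ymin := ymin) (ymax := ymax) hsupp]
  exact integral_map (quantile_aemeasurable hsupp) aestronglyMeasurable_id

end Aux

/-- Explicit evaluation of the sharp lower bound in the binary-instrument example
with constant propensity `1/2`: with the step weight `ω = 1` on `(0,1/4]`,
`= 1/2` on `(1/4,3/4]`, `= 0` on `(3/4,1]`, the countermonotonic OT value on the
identified interval `(0,1/2]` plus the trivial tail contribution equals
`(1/4)𝔼_ρ[Y] + (1/8)·CVaR_{0.5}(ρ) + (1/8)·y_min`, where
`CVaR_α(ρ) = (1/α)∫₀^α Q(s) ds` (here `CVaR_{0.5} = 2∫₀^{1/2} Q`). -/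
theorem stmt16 (ymin ymax : ℝ) (hy : ymin ≤ ymax)
    (ρ : Measure ℝ) [IsProbabilityMeasure ρ] (hsupp : ρ (Icc ymin ymax)ᶜ = 0)
    (ω : ℝ → ℝ)
    (hω : ω = fun u => if u ≤ (1/4 : ℝ) then 1 else if u ≤ (3/4 : ℝ) then 1/2 else 0) :
    (∫ u in (0:ℝ)..(1/2 : ℝ), quantile ρ (2 * u) * ω u)
        + (∫ u in (1/2:ℝ)..(1:ℝ), ymin * ω u)
      = (1/4) * (∫ x, x ∂ρ)
        + (1/8) * (2 * ∫ s in (0:ℝ)..(1/2 : ℝ), quantile ρ s)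
        + (1/8) * ymin := by
  set Q := quantile ρ with hQ
  have hQint : IntegrableOn Q (Ioc (0:ℝ) 1) volume := quantile_integrableOn hsupp
  set E : ℝ := ∫ s in Ioc (0:ℝ) 1, Q s with hE
  set A : ℝ := ∫ s in Ioc (0:ℝ) (1/2), Q s with hA
  -- mean = integral of quantile
  have hmean : ∫ x, x ∂ρ = E := integral_quantile hsupp
  -- the RHS interval integral is A
  have hRA : (∫ s in (0:ℝ)..(1/2 : ℝ), Q s) = A := by
    rw [intervalIntegral.integral_of_le (by norm_num)]
  -- first summand
  have h1 : (∫ u in (0:ℝ)..(1/2 : ℝ), Q (2 * u) * ω u)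
      = 2⁻¹ * ((1/2) * E + (1/2) * A) := by
    have key := intervalIntegral.integral_comp_mul_left (a := (0:ℝ)) (b := 1/2)
      (fun s => Q s * ω (s / 2)) (two_ne_zero (α := ℝ))
    simp only [mul_div_cancel_left₀ _ (two_ne_zero (α := ℝ))] at key
    norm_num at key
    rw [key]
    norm_num
    rw [intervalIntegral.integral_of_le (by norm_num : (0:ℝ) ≤ 1)]
    have hcongr : EqOn (fun s => Q s * ω (s / 2))
        (fun s => Q s * (1/2) + (Iic (1/2:ℝ)).indicator (fun s => Q s * (1/2)) s)
        (Ioc (0:ℝ) 1) := by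
      intro s hs
      have h34 : s / 2 ≤ 3/4 := by linarith [hs.2]
      rw [hω]
      show Q s * (if s / 2 ≤ (1/4:ℝ) then (1:ℝ) else if s / 2 ≤ 3/4 then 1/2 else 0)
        = Q s * (1/2) + (Iic (1/2:ℝ)).indicator (fun s => Q s * (1/2)) s
      by_cases h : s ≤ (1/2 : ℝ)
      · rw [if_pos (by linarith : s / 2 ≤ (1/4:ℝ)),
          indicator_of_mem (show s ∈ Iic (1/2:ℝ) from h)]
        ring
      · rw [if_neg (show ¬ s / 2 ≤ (1/4:ℝ) by intro hc; exact h (by linarith)),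
          if_pos h34, indicator_of_notMem (show s ∉ Iic (1/2:ℝ) by simpa using h)]
        ring
    rw [setIntegral_congr_fun measurableSet_Ioc hcongr]
    rw [integral_add (hQint.mul_const _) ((hQint.mul_const _).indicator measurableSet_Iic)]
    rw [setIntegral_indicator measurableSet_Iic]
    have hIoc : Ioc (0:ℝ) 1 ∩ Iic (1/2) = Ioc (0:ℝ) (1/2) := by
      rw [Ioc_inter_Iic]
      norm_num
    rw [hIoc, integral_mul_const, integral_mul_const]
    rw [← hE, ← hA]
    ring
  -- second summand
  have h2 : (∫ u in (1/2:ℝ)..(1:ℝ), ymin * ω u) = (1/8) * ymin := by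
    rw [intervalIntegral.integral_of_le (by norm_num : (1/2:ℝ) ≤ 1)]
    have hcongr : EqOn (fun u => ymin * ω u)
        ((Iic (3/4:ℝ)).indicator (fun _ => ymin * (1/2))) (Ioc (1/2:ℝ) 1) := by
      intro u hu
      rw [hω]
      show ymin * (if u ≤ (1/4:ℝ) then (1:ℝ) else if u ≤ 3/4 then 1/2 else 0)
        = (Iic (3/4:ℝ)).indicator (fun _ => ymin * (1/2)) u
      rw [if_neg (show ¬ u ≤ (1/4:ℝ) by intro hc; linarith [hu.1])]
      by_cases h : u ≤ (3/4 : ℝ)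
      · rw [if_pos h, indicator_of_mem (show u ∈ Iic (3/4:ℝ) from h)]
      · rw [if_neg h, indicator_of_notMem (show u ∉ Iic (3/4:ℝ) by simpa using h), mul_zero]
    rw [setIntegral_congr_fun measurableSet_Ioc hcongr]
    rw [setIntegral_indicator measurableSet_Iic]
    have hIoc : Ioc (1/2:ℝ) 1 ∩ Iic (3/4) = Ioc (1/2:ℝ) (3/4) := by
      rw [Ioc_inter_Iic]
      norm_num
    rw [hIoc, setIntegral_const]
    simp [Real.volume_Ioc]
    norm_num
    ring
  rw [h1, h2, hmean, hRA]
  ring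
end
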